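/- Let (B, ψ, A) be a real quantum graph admitting an alg-2 coloring, i.e. there exist a unital *-algebra 𝒜 and projections P₁, P₂ ∈ B ⊗ 𝒜 with P₁ + P₂ = 1, P₁ ≠ 0 ≠ P₂, and λ(Pⱼ)(A ⊗ 1_𝒜)λ(Pⱼ) = 0 for j = 1, 2, where λ denotes left multiplication on L²(B,ψ) ⊗ 𝒜. Then Spec(A) is symmetric: Spec(A) = −Spec(A). If moreover 𝒜 is finite-dimensional (a q-2 coloring) then the symmetry holds with multiplicities of generalized eigenspaces. -/
import Mathlib


open TensorProduct

/-- Linear extension of `x ⊗ y ↦ ψ(b·x)·ψ(c·y)` (GNS pairing on the tensor square). -/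
noncomputable def pairQ (B : Type*) [Ring B] [Algebra ℂ B]
    (ψ : B →ₗ[ℂ] ℂ) (b c : B) : TensorProduct ℂ B B →ₗ[ℂ] ℂ :=
  TensorProduct.lift ((LinearMap.mul ℂ ℂ).compl₁₂
    (ψ ∘ₗ LinearMap.mulLeft ℂ b) (ψ ∘ₗ LinearMap.mulLeft ℂ c))

/-- The canonical involution `star (b ⊗ a) = star b ⊗ star a` on `B ⊗ 𝒜`. -/
noncomputable def tensorStar (B 𝒜 : Type*) [Ring B] [Algebra ℂ B] [StarRing B]
    [StarModule ℂ B] [Ring 𝒜] [Algebra ℂ 𝒜] [StarRing 𝒜] [StarModule ℂ 𝒜] :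
    TensorProduct ℂ B 𝒜 →+ TensorProduct ℂ B 𝒜 :=
  TensorProduct.liftAddHom
    (AddMonoidHom.mk' (fun b => AddMonoidHom.mk'
        (fun a => star b ⊗ₜ[ℂ] star a)
        (fun a a' => by simp [star_add, TensorProduct.tmul_add]))
      (fun b b' => AddMonoidHom.ext fun a => by simp [star_add, TensorProduct.add_tmul]))
    (fun c b a => by simp [star_smul, TensorProduct.smul_tmul])

section Aux

open Module LinearMap

/-- Dimension of the kernel of `f ⊗ id` on a tensor product of finite-dimensional
vector spaces. -/
lemma auxFinrankKerRTensor {K : Type*} [Field K] {V W : Type*} [AddCommGroup V] [Module K V]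
    [AddCommGroup W] [Module K W] [FiniteDimensional K V] [FiniteDimensional K W]
    (f : V →ₗ[K] V) :
    Module.finrank K (LinearMap.ker (f.rTensor W)) =
      Module.finrank K (LinearMap.ker f) * Module.finrank K W := by
  have hexact : Function.Exact (LinearMap.ker f).subtype f := f.exact_subtype_ker_map
  have h2 : Function.Exact ((LinearMap.ker f).subtype.rTensor W) (f.rTensor W) :=
    Module.Flat.rTensor_exact W hexact
  have hker : LinearMap.ker (f.rTensor W)
      = LinearMap.range ((LinearMap.ker f).subtype.rTensor W) := h2.linearMap_ker_eq
  have hinj : Function.Injective ((LinearMap.ker f).subtype.rTensor W) :=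
    Module.Flat.rTensor_preserves_injective_linearMap _ (Submodule.injective_subtype _)
  rw [hker, LinearMap.finrank_range_of_inj hinj, Module.finrank_tensorProduct]

end Aux

set_option maxHeartbeats 4000000 in
/-- If a real quantum graph `(B, ψ, A)` admits an `alg`-2 coloring
— a unital `*`-algebra `𝒜` and nonzero projections `P₁, P₂ ∈ B ⊗ 𝒜` with
`P₁ + P₂ = 1` and `λ(Pⱼ)(A ⊗ 1)λ(Pⱼ) = 0` — then `Spec(A)` is symmetric.  If moreover
`𝒜` is finite-dimensional (a `q`-2 coloring), the symmetry holds with multiplicities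
of generalized eigenspaces. -/
theorem alg_two_coloring_symmetric_spectrum
    (B : Type*) [NormedRing B] [StarRing B] [CStarRing B] [NormedAlgebra ℂ B]
    [StarModule ℂ B] [FiniteDimensional ℂ B]
    (ψ : B →ₗ[ℂ] ℂ)
    (hψ1 : ψ 1 = 1)
    (hψpos : ∀ x : B, 0 ≤ (ψ (star x * x)).re ∧ (ψ (star x * x)).im = 0)
    (hψfaith : ∀ x : B, ψ (star x * x) = 0 → x = 0)
    (δ : ℝ) (hδ : 0 < δ)
    (mdag : B →ₗ[ℂ] TensorProduct ℂ B B)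
    (hmdag : ∀ a b c : B, pairQ B ψ (star b) (star c) (mdag a) = ψ (star (b * c) * a))
    (hδform : LinearMap.mul' ℂ B ∘ₗ mdag = ((δ : ℂ) ^ 2) • LinearMap.id)
    (A : B →ₗ[ℂ] B)
    (hSchur : ((δ : ℂ) ^ 2) • A = LinearMap.mul' ℂ B ∘ₗ TensorProduct.map A A ∘ₗ mdag)
    (hreal : ∀ x : B, A (star x) = star (A x))
    (𝒜 : Type*) [Ring 𝒜] [Algebra ℂ 𝒜] [StarRing 𝒜] [StarModule ℂ 𝒜]
    (P₁ P₂ : TensorProduct ℂ B 𝒜)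
    (hstar₁ : tensorStar B 𝒜 P₁ = P₁) (hstar₂ : tensorStar B 𝒜 P₂ = P₂)
    (hidem₁ : P₁ * P₁ = P₁) (hidem₂ : P₂ * P₂ = P₂)
    (hsum : P₁ + P₂ = 1) (hne₁ : P₁ ≠ 0) (hne₂ : P₂ ≠ 0)
    (hcol₁ : ∀ ξ : TensorProduct ℂ B 𝒜,
      P₁ * TensorProduct.map A LinearMap.id (P₁ * ξ) = 0)
    (hcol₂ : ∀ ξ : TensorProduct ℂ B 𝒜,
      P₂ * TensorProduct.map A LinearMap.id (P₂ * ξ) = 0) :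
    (∀ lam : ℂ, lam ∈ spectrum ℂ A ↔ -lam ∈ spectrum ℂ A) ∧
      (FiniteDimensional ℂ 𝒜 →
        ∀ lam : ℂ, Module.finrank ℂ (Module.End.maxGenEigenspace A lam)
          = Module.finrank ℂ (Module.End.maxGenEigenspace A (-lam))) := by
    classical
  obtain ⟨T, hT⟩ : ∃ T' : TensorProduct ℂ B 𝒜 →ₗ[ℂ] TensorProduct ℂ B 𝒜,
      T' = TensorProduct.map A LinearMap.id := ⟨_, rfl⟩
  have hTr : T = A.rTensor 𝒜 := hT
  have hcolT₁ : ∀ ξ : TensorProduct ℂ B 𝒜, P₁ * T (P₁ * ξ) = 0 := by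
    intro ξ; rw [hT]; exact hcol₁ ξ
  have hcolT₂ : ∀ ξ : TensorProduct ℂ B 𝒜, P₂ * T (P₂ * ξ) = 0 := by
    intro ξ; rw [hT]; exact hcol₂ ξ
  obtain ⟨P, hP⟩ : ∃ P' : TensorProduct ℂ B 𝒜, P' = P₁ - P₂ := ⟨_, rfl⟩
  -- the cross terms vanish
  have hcross : P₁ * P₂ + P₂ * P₁ = 0 := by
    have key : (P₁ + P₂) * (P₁ + P₂) = P₁ * P₁ + (P₁ * P₂ + P₂ * P₁) + P₂ * P₂ := by
      noncomm_ring
    rw [hsum, one_mul, hidem₁, hidem₂] at key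
    have h1 : (1 : TensorProduct ℂ B 𝒜) + 0 = (P₁ + P₂) + (P₁ * P₂ + P₂ * P₁) := by
      rw [add_zero, key]; abel
    rw [hsum] at h1
    exact (add_left_cancel h1).symm
  -- `P` squares to one
  have hsq : P * P = 1 := by
    have key : P * P = P₁ * P₁ - (P₁ * P₂ + P₂ * P₁) + P₂ * P₂ := by
      rw [hP]; noncomm_ring
    rw [key, hcross, hidem₁, hidem₂, sub_zero, hsum]
  have hQQ : ∀ ξ : TensorProduct ℂ B 𝒜, P * (P * ξ) = ξ := by
    intro ξ; rw [← mul_assoc, hsq, one_mul]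
  -- anticommutation
  have hanti : ∀ ξ : TensorProduct ℂ B 𝒜, P * T (P * ξ) = - T ξ := by
    intro ξ
    have hu : P₁ * T (P₁ * ξ) = 0 := hcolT₁ ξ
    have hv : P₂ * T (P₂ * ξ) = 0 := hcolT₂ ξ
    have hTsplit : T (P * ξ) = T (P₁ * ξ) - T (P₂ * ξ) := by
      rw [hP, sub_mul, map_sub]
    have hTξ : T ξ = T (P₁ * ξ) + T (P₂ * ξ) := by
      rw [← map_add, ← add_mul, hsum, one_mul]
    set u := T (P₁ * ξ) with hudef
    set v := T (P₂ * ξ) with hvdef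
    have h1 : P * (u - v) = P₁ * u - P₁ * v - P₂ * u + P₂ * v := by
      rw [hP]; noncomm_ring
    have h2 : u + v = P₁ * u + P₁ * v + P₂ * u + P₂ * v := by
      have h3 : (P₁ + P₂) * (u + v) = u + v := by rw [hsum, one_mul]
      rw [← h3]; noncomm_ring
    rw [hTsplit, h1, hu, hv, hTξ, h2, hu, hv]
    abel
  have hTQ : ∀ ξ : TensorProduct ℂ B 𝒜, T (P * ξ) = -(P * T ξ) :=
    fun ξ => by
      calc T (P * ξ) = P * (P * T (P * ξ)) := (hQQ _).symm
        _ = P * (- T ξ) := by rw [hanti ξ]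
        _ = -(P * T ξ) := mul_neg _ _
  -- `𝒜` is nontrivial
  have hnt : Nontrivial 𝒜 := by
    by_contra h
    rw [not_nontrivial_iff_subsingleton] at h
    apply hne₁
    have h1 : (1 : TensorProduct ℂ B 𝒜) = 0 := by
      rw [Algebra.TensorProduct.one_def, Subsingleton.elim (1 : 𝒜) 0,
        TensorProduct.tmul_zero]
    rw [← mul_one P₁, h1, mul_zero]
  haveI := hnt
  -- nonvanishing of simple tensors with `1`
  have htmul : ∀ w : B, w ≠ 0 → w ⊗ₜ[ℂ] (1 : 𝒜) ≠ 0 := by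
    intro w hw h0
    have h1 : ¬ (∀ φ : Module.Dual ℂ 𝒜, φ (1 : 𝒜) = 0) := by
      rw [Module.forall_dual_apply_eq_zero_iff]
      exact one_ne_zero
    push_neg at h1
    obtain ⟨φ, hφ⟩ := h1
    have h2 := congrArg
      ((TensorProduct.rid ℂ B).toLinearMap ∘ₗ (LinearMap.lTensor B φ)) h0
    simp only [map_zero, LinearMap.comp_apply, LinearMap.lTensor_tmul,
      LinearEquiv.coe_coe, TensorProduct.rid_tmul] at h2
    exact hw (by simpa [smul_eq_zero, hφ] using h2)
  -- one direction of the spectral symmetry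
  have key : ∀ lam : ℂ, lam ∈ spectrum ℂ A → -lam ∈ spectrum ℂ A := by
    intro lam hlam
    obtain ⟨v, hv⟩ :=
      (Module.End.hasEigenvalue_iff_mem_spectrum.mpr hlam).exists_hasEigenvector
    set x : TensorProduct ℂ B 𝒜 := v ⊗ₜ (1 : 𝒜) with hxdef
    have hx : x ≠ 0 := htmul v hv.right
    have hTx : T x = lam • x := by
      rw [hxdef, hT]
      rw [TensorProduct.map_tmul, hv.apply_eq_smul, LinearMap.id_apply,
        TensorProduct.smul_tmul']
    set y := P * x with hydef
    have hy : y ≠ 0 := fun h => hx (by rw [← hQQ x, ← hydef, h, mul_zero])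
    have hTy : T y = (-lam) • y := by
      rw [hydef, hTQ x, hTx, mul_smul_comm, neg_smul]
    by_contra hns
    rw [spectrum.mem_iff, not_not] at hns
    obtain ⟨u, hu⟩ := hns
    have h1 : ((↑u⁻¹ : Module.End ℂ B) ∘ₗ (algebraMap ℂ (Module.End ℂ B) (-lam) - A))
        = LinearMap.id := by
      rw [← hu]
      exact u.inv_mul
    have hrt : ((algebraMap ℂ (Module.End ℂ B) (-lam) - A).rTensor 𝒜) y = 0 := by
      have hsmul : (algebraMap ℂ (Module.End ℂ B) (-lam)) = (-lam) • LinearMap.id := by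
        ext w; simp [Module.algebraMap_end_apply]
      rw [LinearMap.rTensor_sub, hsmul, LinearMap.rTensor_smul, LinearMap.rTensor_id]
      rw [LinearMap.sub_apply, LinearMap.smul_apply, LinearMap.id_apply, ← hTr, hTy,
        sub_self]
    have h2 := congrArg ((↑u⁻¹ : Module.End ℂ B).rTensor 𝒜) hrt
    rw [← LinearMap.rTensor_comp_apply, h1, LinearMap.rTensor_id, map_zero] at h2
    exact hy (by simpa using h2)
  refine ⟨fun lam => ⟨key lam, fun h => by simpa using key (-lam) h⟩, ?_⟩
  -- multiplicities
  intro hfd lam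
  haveI := hfd
  set n : ℕ := max (Module.finrank ℂ B) (Module.finrank ℂ (TensorProduct ℂ B 𝒜)) with hndef
  have hmaxA : ∀ μ : ℂ, Module.End.maxGenEigenspace A μ
      = LinearMap.ker ((A - μ • 1) ^ n) := by
    intro μ
    rw [Module.End.maxGenEigenspace_eq_genEigenspace_finrank,
      ← Module.End.genEigenspace_eq_genEigenspace_finrank_of_le A μ
        (le_max_left _ _ : Module.finrank ℂ B ≤ n),
      Module.End.genEigenspace_nat]
  have hKT : ∀ μ : ℂ, (T - μ • 1) ^ n = ((A - μ • 1) ^ n).rTensor 𝒜 := by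
    intro μ
    have h1 : (A - μ • 1).rTensor 𝒜 = T - μ • 1 := by
      rw [LinearMap.rTensor_sub, LinearMap.rTensor_smul, hTr]
      congr 1
      rw [Module.End.one_eq_id, Module.End.one_eq_id, LinearMap.rTensor_id]
      
    rw [← LinearMap.rTensor_pow, h1]
  have key1 : ∀ μ : ℂ, Module.finrank ℂ (LinearMap.ker ((T - μ • 1) ^ n))
      = Module.finrank ℂ (LinearMap.ker ((A - μ • 1) ^ n)) * Module.finrank ℂ 𝒜 := by
    intro μ
    rw [hKT μ, auxFinrankKerRTensor]
  -- the involution as an invertible endomorphism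
  obtain ⟨q, hq⟩ : ∃ q' : Module.End ℂ (TensorProduct ℂ B 𝒜),
      q' = LinearMap.mulLeft ℂ P := ⟨_, rfl⟩
  have hqapp : ∀ ξ, q ξ = P * ξ := fun ξ => by rw [hq, LinearMap.mulLeft_apply]
  have hq1 : q * q = 1 := by
    apply LinearMap.ext; intro ξ
    rw [Module.End.mul_apply, hqapp, hqapp, hQQ, Module.End.one_apply]
  have hqinj : Function.Injective q := by
    intro a b h
    rw [hqapp, hqapp] at h
    calc a = P * (P * a) := (hQQ a).symm
      _ = P * (P * b) := by rw [h]
      _ = b := hQQ b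
  have hqT : q * T * q = -T := by
    apply LinearMap.ext; intro ξ
    rw [Module.End.mul_apply, Module.End.mul_apply, hqapp, hqapp, LinearMap.neg_apply]
    exact hanti ξ
  have hconj : ∀ μ : ℂ, q * (T - μ • 1) * q = -(T - (-μ) • 1) := by
    intro μ
    have h1 : q * (T - μ • 1) * q = q * T * q - μ • (q * q) := by
      rw [mul_sub, sub_mul, mul_smul_comm, smul_mul_assoc, mul_one]
    rw [h1, hqT, hq1]
    apply LinearMap.ext; intro ξ
    rw [LinearMap.sub_apply, LinearMap.neg_apply, LinearMap.smul_apply,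
      Module.End.one_apply, LinearMap.neg_apply, LinearMap.sub_apply,
      LinearMap.smul_apply, Module.End.one_apply, neg_smul, sub_neg_eq_add,
      neg_add, ← sub_eq_add_neg]
  have hsemi : ∀ μ : ℂ, SemiconjBy q (-(T - (-μ) • 1)) (T - μ • 1) := by
    intro μ
    have h2 : (T - μ • 1) * q = q * (q * (T - μ • 1) * q) := by
      rw [← mul_assoc, ← mul_assoc, hq1, one_mul]
    rw [SemiconjBy, ← hconj μ, h2]
  have hpowrel : ∀ (μ : ℂ) (k : ℕ),
      (T - μ • 1) ^ k * q = q * (-(T - (-μ) • 1)) ^ k := by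
    intro μ k
    exact ((hsemi μ).pow_right k).symm
  have hle : ∀ (μ : ℂ) (x : TensorProduct ℂ B 𝒜),
      x ∈ LinearMap.ker ((T - (-μ) • 1) ^ n) →
        q x ∈ LinearMap.ker ((T - μ • 1) ^ n) := by
    intro μ x hx
    rw [LinearMap.mem_ker] at hx ⊢
    have h2 : ((T - μ • 1) ^ n * q) x = (q * (-(T - (-μ) • 1)) ^ n) x := by
      rw [hpowrel]
    rw [Module.End.mul_apply, Module.End.mul_apply] at h2
    have hgx : ((-(T - (-μ) • 1)) ^ n) x = 0 := by
      rw [← neg_one_smul ℂ (T - (-μ) • 1), smul_pow, LinearMap.smul_apply, hx,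
        smul_zero]
    rw [h2, hgx, map_zero]
  have heq : ∀ μ : ℂ,
      Submodule.map q (LinearMap.ker ((T - (-μ) • 1) ^ n))
        = LinearMap.ker ((T - μ • 1) ^ n) := by
    intro μ
    apply le_antisymm
    · rintro _ ⟨x, hx, rfl⟩
      exact hle μ x hx
    · intro x hx
      have hmem : q x ∈ LinearMap.ker ((T - (-μ) • 1) ^ n) :=
        hle (-μ) x (by rwa [neg_neg])
      exact ⟨q x, hmem, by rw [hqapp, hqapp]; exact hQQ x⟩
  have hfr : ∀ μ : ℂ, Module.finrank ℂ (LinearMap.ker ((T - μ • 1) ^ n))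
      = Module.finrank ℂ (LinearMap.ker ((T - (-μ) • 1) ^ n)) := by
    intro μ
    rw [← heq μ]
    exact (Submodule.equivMapOfInjective q hqinj _).finrank_eq.symm
  have hA2 : ∀ μ : ℂ,
      Module.finrank ℂ (Module.End.maxGenEigenspace A μ) * Module.finrank ℂ 𝒜
        = Module.finrank ℂ (LinearMap.ker ((T - μ • 1) ^ n)) := by
    intro μ
    rw [hmaxA μ, ← key1 μ]
  have hpos : 0 < Module.finrank ℂ 𝒜 := Module.finrank_pos
  have hfinal := (hA2 lam).trans ((hfr lam).trans (hA2 (-lam)).symm)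
  exact Nat.eq_of_mul_eq_mul_right hpos hfinal
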